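/- If 1 < p < 2, there is a constant c = c(k,p) such that for all z, η ∈ ℝ^k: |V_p(z) - V_p(η)| ≤ c |V_p(z - η)|. -/

import Mathlib

open Real

noncomputable def V (p : ℝ) {k : ℕ} (z : EuclideanSpace ℝ (Fin k)) :
    EuclideanSpace ℝ (Fin k) :=
  ((1 + ‖z‖ ^ 2) ^ ((p - 2) / 4)) • z

/-- monotonicity of `t ↦ (1+t^2)^α * t` for `-1/2 ≤ α ≤ 0`. -/
lemma gmono {α s t : ℝ} (hα : -2⁻¹ ≤ α) (hα0 : α ≤ 0) (hs : 0 ≤ s) (hst : s ≤ t) :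
    (1 + s ^ 2) ^ α * s ≤ (1 + t ^ 2) ^ α * t := by
  rcases eq_or_lt_of_le hs with h0 | h0
  · rw [← h0, mul_zero]
    exact mul_nonneg (Real.rpow_nonneg (by positivity) _) (hs.trans hst)
  have ht : 0 < t := lt_of_lt_of_le h0 hst
  have hs2 : (0:ℝ) < 1 + s ^ 2 := by positivity
  have ht2 : (0:ℝ) < 1 + t ^ 2 := by positivity
  have key : ((1 + t ^ 2) / (1 + s ^ 2)) ^ (-α) ≤ t / s := by
    have h1 : (1 + t ^ 2) / (1 + s ^ 2) ≤ (t / s) ^ (2:ℕ) := by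
      rw [div_pow, div_le_div_iff₀ hs2 (by positivity)]
      nlinarith [sq_nonneg s, sq_nonneg t]
    have h2 : ((1 + t ^ 2) / (1 + s ^ 2)) ^ (-α) ≤ ((t / s) ^ (2:ℕ)) ^ (-α) :=
      Real.rpow_le_rpow (by positivity) h1 (by linarith)
    have h3 : ((t / s) ^ (2:ℕ)) ^ (-α) = (t / s) ^ ((2:ℝ) * (-α)) := by
      rw [← Real.rpow_natCast (t / s) 2, ← Real.rpow_mul (by positivity)]
      norm_num
    have h4 : (t / s) ^ ((2:ℝ) * (-α)) ≤ (t / s) ^ (1:ℝ) := by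
      apply Real.rpow_le_rpow_of_exponent_le
      · rw [le_div_iff₀ h0]; linarith
      · linarith
    rw [Real.rpow_one] at h4
    calc ((1 + t ^ 2) / (1 + s ^ 2)) ^ (-α) ≤ ((t / s) ^ (2:ℕ)) ^ (-α) := h2
      _ = (t / s) ^ ((2:ℝ) * (-α)) := h3
      _ ≤ t / s := h4
  have n1 : (1 + t ^ 2) ^ α ≠ 0 := ne_of_gt (Real.rpow_pos_of_pos ht2 α)
  have n2 : (1 + s ^ 2) ^ α ≠ 0 := ne_of_gt (Real.rpow_pos_of_pos hs2 α)
  have hexp : (1 + s ^ 2) ^ α = (1 + t ^ 2) ^ α * ((1 + t ^ 2) / (1 + s ^ 2)) ^ (-α) := by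
    rw [Real.div_rpow (le_of_lt ht2) (le_of_lt hs2), Real.rpow_neg (le_of_lt ht2),
      Real.rpow_neg (le_of_lt hs2)]
    field_simp
  rw [hexp]
  calc (1 + t ^ 2) ^ α * ((1 + t ^ 2) / (1 + s ^ 2)) ^ (-α) * s
      ≤ (1 + t ^ 2) ^ α * (t / s) * s := by
        apply mul_le_mul_of_nonneg_right _ hs
        exact mul_le_mul_of_nonneg_left key (Real.rpow_nonneg (le_of_lt ht2) α)
    _ = (1 + t ^ 2) ^ α * t := by field_simp

/-- Bernoulli-type bound. -/
lemma bern {α x y : ℝ} (hα : -1 ≤ α) (hα0 : α ≤ 0) (hx : 1 ≤ x) (hxy : x ≤ y) :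
    x ^ α - y ^ α ≤ (-α) * (x ^ (α - 1) * (y - x)) := by
  have hx0 : (0:ℝ) < x := lt_of_lt_of_le one_pos hx
  have hy0 : (0:ℝ) < y := lt_of_lt_of_le hx0 hxy
  set s : ℝ := (y - x) / x with hsdef
  have hs : 0 ≤ s := div_nonneg (by linarith) (le_of_lt hx0)
  have hy : y = x * (1 + s) := by rw [hsdef]; field_simp; ring
  set β : ℝ := -α with hbdef
  have hβ0 : 0 ≤ β := by simp only [hbdef]; linarith
  have hβ1 : β ≤ 1 := by simp only [hbdef]; linarith
  have h1s : (0:ℝ) < 1 + s := by linarith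
  have h1 : (1 + s) ^ β ≤ 1 + β * s :=
    rpow_one_add_le_one_add_mul_self (by linarith) hβ0 hβ1
  have hpos : (0:ℝ) < (1 + s) ^ β := Real.rpow_pos_of_pos h1s β
  have hbs : (0:ℝ) < 1 + β * s := by positivity
  have hA : (1 + β * s)⁻¹ ≤ ((1 + s) ^ β)⁻¹ := by
    have := one_div_le_one_div_of_le hpos h1
    rwa [one_div, one_div] at this
  have hB : 1 - β * s ≤ (1 + β * s)⁻¹ := by
    have hmul : (1 - β * s) * (1 + β * s) ≤ 1 := by nlinarith [sq_nonneg (β * s)]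
    calc 1 - β * s = (1 - β * s) * (1 + β * s) * (1 + β * s)⁻¹ := by
          field_simp
      _ ≤ 1 * (1 + β * s)⁻¹ := mul_le_mul_of_nonneg_right hmul (by positivity)
      _ = (1 + β * s)⁻¹ := one_mul _
  have h2 : (1 : ℝ) - β * s ≤ (1 + s) ^ α := by
    have hinv : (1 + s) ^ α = ((1 + s) ^ β)⁻¹ := by
      rw [show α = -β by rw [hbdef]; ring, Real.rpow_neg (le_of_lt h1s)]
    rw [hinv]
    exact le_trans hB hA
  have h4 : y ^ α = x ^ α * (1 + s) ^ α := by
    rw [hy, Real.mul_rpow (le_of_lt hx0) (le_of_lt h1s)]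
  have hxα : (0:ℝ) < x ^ α := Real.rpow_pos_of_pos hx0 α
  have h5 : x ^ α * (1 - β * s) ≤ y ^ α := by
    rw [h4]; exact mul_le_mul_of_nonneg_left h2 (le_of_lt hxα)
  have h6 : x ^ α * (β * s) = β * (x ^ (α - 1) * (y - x)) := by
    have hx1 : x ^ (α - 1) = x ^ α / x := by
      rw [Real.rpow_sub hx0, Real.rpow_one]
    rw [hx1, hsdef]
    field_simp
  have : x ^ α - y ^ α ≤ x ^ α * (β * s) := by nlinarith
  rw [h6] at this
  simpa [hbdef] using this

lemma Vnorm (p : ℝ) {k : ℕ} (z : EuclideanSpace ℝ (Fin k)) :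
    ‖V p z‖ = (1 + ‖z‖ ^ 2) ^ ((p - 2) / 4) * ‖z‖ := by
  rw [V, norm_smul, Real.norm_eq_abs, abs_of_nonneg (Real.rpow_nonneg (by positivity) _)]

set_option maxHeartbeats 1000000 in
lemma key_half {k : ℕ} (p : ℝ) (hp1 : 1 < p) (hp2 : p < 2)
    (z η : EuclideanSpace ℝ (Fin k)) (hba : ‖η‖ ≤ ‖z‖) :
    ‖V p z - V p η‖ ≤ 6 * ‖V p (z - η)‖ := by
  set α : ℝ := (p - 2) / 4 with hadef
  have hα0 : α ≤ 0 := by rw [hadef]; linarith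
  have hα : -2⁻¹ ≤ α := by rw [hadef]; norm_num; linarith
  have hα4 : -4⁻¹ < α := by rw [hadef]; norm_num; linarith
  set a : ℝ := ‖z‖ with hadef'
  set b : ℝ := ‖η‖ with hbdef'
  set t : ℝ := ‖z - η‖ with htdef
  have ha0 : 0 ≤ a := norm_nonneg _
  have hb0 : 0 ≤ b := norm_nonneg _
  have ht0 : 0 ≤ t := norm_nonneg _
  have hat : a ≤ b + t := by
    rw [hadef', hbdef', htdef]
    calc ‖z‖ = ‖η + (z - η)‖ := by rw [add_sub_cancel]
      _ ≤ ‖η‖ + ‖z - η‖ := norm_add_le _ _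
  have hab : a - b ≤ t := norm_sub_norm_le z η
  have hVz : ‖V p z‖ = (1 + a ^ 2) ^ α * a := Vnorm p z
  have hVη : ‖V p η‖ = (1 + b ^ 2) ^ α * b := Vnorm p η
  have hVt : ‖V p (z - η)‖ = (1 + t ^ 2) ^ α * t := Vnorm p (z - η)
  have ha2 : (0:ℝ) < 1 + a ^ 2 := by positivity
  have hb2 : (0:ℝ) < 1 + b ^ 2 := by positivity
  have ht2 : (0:ℝ) < 1 + t ^ 2 := by positivity
  have hanti : ∀ u v : ℝ, 0 ≤ u → u ≤ v → (1 + v ^ 2) ^ α ≤ (1 + u ^ 2) ^ α := by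
    intro u v hu huv
    exact Real.antitoneOn_rpow_Ioi_of_exponent_nonpos hα0
      (Set.mem_Ioi.mpr (by positivity)) (Set.mem_Ioi.mpr (by positivity)) (by nlinarith)
  have hgt : (0:ℝ) ≤ (1 + t ^ 2) ^ α * t :=
    mul_nonneg (Real.rpow_nonneg (le_of_lt ht2) α) ht0
  rcases le_or_gt b t with hcase | hcase
  · -- b ≤ t : triangle inequality
    have htri : ‖V p z - V p η‖ ≤ (1 + a ^ 2) ^ α * a + (1 + b ^ 2) ^ α * b := by
      calc ‖V p z - V p η‖ ≤ ‖V p z‖ + ‖V p η‖ := norm_sub_le _ _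
        _ = (1 + a ^ 2) ^ α * a + (1 + b ^ 2) ^ α * b := by rw [hVz, hVη]
    have hη' : (1 + b ^ 2) ^ α * b ≤ (1 + t ^ 2) ^ α * t := gmono hα hα0 hb0 hcase
    have hz' : (1 + a ^ 2) ^ α * a ≤ 2 * ((1 + t ^ 2) ^ α * t) := by
      rcases le_or_gt a t with h | h
      · have := gmono hα hα0 ha0 h
        linarith
      · have h1 : (1 + a ^ 2) ^ α ≤ (1 + t ^ 2) ^ α := hanti t a ht0 (le_of_lt h)
        have h2 : a ≤ 2 * t := by linarith
        calc (1 + a ^ 2) ^ α * a ≤ (1 + t ^ 2) ^ α * (2 * t) :=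
              mul_le_mul h1 h2 ha0 (Real.rpow_nonneg (le_of_lt ht2) α)
          _ = 2 * ((1 + t ^ 2) ^ α * t) := by ring
    rw [hVt]
    linarith
  · -- t < b ≤ a : cancellation
    have hfab : (1 + a ^ 2) ^ α ≤ (1 + b ^ 2) ^ α := hanti b a hb0 hba
    have hdecomp : V p z - V p η =
        ((1 + a ^ 2) ^ α) • (z - η) + ((1 + a ^ 2) ^ α - (1 + b ^ 2) ^ α) • η := by
      rw [V, V]
      rw [smul_sub, sub_smul]
      abel
    have hnorm : ‖V p z - V p η‖ ≤
        (1 + a ^ 2) ^ α * t + ((1 + b ^ 2) ^ α - (1 + a ^ 2) ^ α) * b := by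
      rw [hdecomp]
      refine le_trans (norm_add_le _ _) ?_
      rw [norm_smul, norm_smul, Real.norm_eq_abs, Real.norm_eq_abs,
        abs_of_nonneg (Real.rpow_nonneg (le_of_lt ha2) α), abs_of_nonpos (by linarith)]
      apply le_of_eq
      ring
    have h1 : (1 + a ^ 2) ^ α * t ≤ (1 + t ^ 2) ^ α * t :=
      mul_le_mul_of_nonneg_right (hanti t a ht0 (by linarith)) ht0
    clear_value α a b t
    set β : ℝ := -α with hβdef
    have hβ0 : (0:ℝ) ≤ β := by rw [hβdef]; linarith
    have hβ1 : 3 * β ≤ 1 := by rw [hβdef, hadef]; linarith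
    have hbern0 := bern (α := α) (x := 1 + b ^ 2) (y := 1 + a ^ 2)
      (by linarith) hα0 (by nlinarith [sq_nonneg b]) (by nlinarith)
    have he : (1 + a ^ 2) - (1 + b ^ 2) = a ^ 2 - b ^ 2 := by ring
    rw [he] at hbern0
    have hbern : (1 + b ^ 2) ^ α - (1 + a ^ 2) ^ α ≤
        β * ((1 + b ^ 2) ^ (α - 1) * (a ^ 2 - b ^ 2)) := by
      rw [hβdef]; exact hbern0
    have hd : a ^ 2 - b ^ 2 ≤ 3 * b * t := by
      nlinarith [mul_le_mul_of_nonneg_left hab (show (0:ℝ) ≤ a + b by linarith),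
        mul_le_mul_of_nonneg_right (show a + b ≤ 3 * b by linarith) ht0]
    have hpow : (1 + b ^ 2) ^ (α - 1) = (1 + b ^ 2) ^ α / (1 + b ^ 2) := by
      rw [Real.rpow_sub hb2, Real.rpow_one]
    have hBnn : (0:ℝ) ≤ (1 + b ^ 2) ^ (α - 1) := Real.rpow_nonneg (le_of_lt hb2) _
    have h2 : ((1 + b ^ 2) ^ α - (1 + a ^ 2) ^ α) * b ≤ (1 + t ^ 2) ^ α * t := by
      calc ((1 + b ^ 2) ^ α - (1 + a ^ 2) ^ α) * b
          ≤ (β * ((1 + b ^ 2) ^ (α - 1) * (3 * b * t))) * b := by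
            apply mul_le_mul_of_nonneg_right _ hb0
            exact le_trans hbern (mul_le_mul_of_nonneg_left
              (mul_le_mul_of_nonneg_left hd hBnn) hβ0)
        _ = 3 * β * t * ((1 + b ^ 2) ^ (α - 1) * b ^ 2) := by ring
        _ ≤ 3 * β * t * ((1 + b ^ 2) ^ (α - 1) * (1 + b ^ 2)) := by
            apply mul_le_mul_of_nonneg_left
              (mul_le_mul_of_nonneg_left (by nlinarith) hBnn)
              (mul_nonneg (by linarith) ht0)
        _ = 3 * β * (t * (1 + b ^ 2) ^ α) := by
            rw [hpow]; field_simp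
        _ ≤ 3 * β * (t * (1 + t ^ 2) ^ α) := by
            apply mul_le_mul_of_nonneg_left
              (mul_le_mul_of_nonneg_left (hanti t b ht0 (le_of_lt hcase)) ht0)
              (by linarith)
        _ ≤ 1 * (t * (1 + t ^ 2) ^ α) := by
            apply mul_le_mul_of_nonneg_right hβ1
            exact mul_nonneg ht0 (Real.rpow_nonneg (le_of_lt ht2) α)
        _ = (1 + t ^ 2) ^ α * t := by ring
    rw [hVt]
    linarith

theorem stmt_5 {k : ℕ} (p : ℝ) (hp1 : 1 < p) (hp2 : p < 2) :
    ∃ c : ℝ, 0 < c ∧ ∀ z η : EuclideanSpace ℝ (Fin k),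
      ‖V p z - V p η‖ ≤ c * ‖V p (z - η)‖ := by
  refine ⟨6, by norm_num, fun z η => ?_⟩
  rcases le_or_gt ‖η‖ ‖z‖ with h | h
  · exact key_half p hp1 hp2 z η h
  · have h1 : ‖V p z - V p η‖ = ‖V p η - V p z‖ := norm_sub_rev _ _
    have h2 : ‖V p (z - η)‖ = ‖V p (η - z)‖ := by
      have he : z - η = -(η - z) := (neg_sub η z).symm
      have : V p (z - η) = -V p (η - z) := by
        rw [V, V, he, norm_neg, smul_neg]
      rw [this, norm_neg]
    rw [h1, h2]
    exact key_half p hp1 hp2 η z (le_of_lt h)
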